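/- For all integers K ≥ 2 and D ≥ 3: (a) evaluating the time-sharing trade-off at load ratio ℓ = (D−1)/D gives 1/(K + (ℓK²D + K)/(ℓKD + 2K − 1)) = (KD + K − 1)/(2K²D); and (b) (D+1)/(2KD) − (KD + K − 1)/(2K²D) = 1/(2K²D) > 0, so the second HetDAPAC scheme's rate (D+1)/(2KD) strictly exceeds the time-shared rate at the same load ratio, with a gain of exactly 1/(2K²D). -/

import Mathlib

/-- At load ratio `ℓ = (D−1)/D`, the time-sharing trade-off gives rate
`(KD+K−1)/(2K²D)`, and the second HetDAPAC scheme's rate `(D+1)/(2KD)` exceeds it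
by exactly `1/(2K²D) > 0`. -/
theorem scheme2_beats_timesharing (K D : ℕ) (hK : 2 ≤ K) (hD : 3 ≤ D) :
    (1 / ((K : ℚ) + ((((D : ℚ) - 1) / D) * (K : ℚ) ^ 2 * D + K)
          / ((((D : ℚ) - 1) / D) * (K : ℚ) * D + 2 * K - 1))
      = ((K : ℚ) * D + K - 1) / (2 * (K : ℚ) ^ 2 * D)) ∧
    (((D : ℚ) + 1) / (2 * K * D) - ((K : ℚ) * D + K - 1) / (2 * (K : ℚ) ^ 2 * D)
      = 1 / (2 * (K : ℚ) ^ 2 * D)) ∧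
    (0 < 1 / (2 * (K : ℚ) ^ 2 * D)) ∧
    (((K : ℚ) * D + K - 1) / (2 * (K : ℚ) ^ 2 * D) < ((D : ℚ) + 1) / (2 * K * D)) := by
  have hKQ : (2 : ℚ) ≤ K := by exact_mod_cast hK
  have hDQ : (3 : ℚ) ≤ D := by exact_mod_cast hD
  have hK0 : (0 : ℚ) < K := by linarith
  have hD0 : (0 : ℚ) < D := by linarith
  have e1 : ((((D : ℚ) - 1) / D) * (K : ℚ) * D) = ((D : ℚ) - 1) * K := by
    field_simp
  have e2 : ((((D : ℚ) - 1) / D) * (K : ℚ) ^ 2 * D) = ((D : ℚ) - 1) * K ^ 2 := by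
    field_simp
  have hden : (0 : ℚ) < ((D : ℚ) - 1) * K + 2 * K - 1 := by nlinarith
  have hpos : (0 : ℚ) < 1 / (2 * (K : ℚ) ^ 2 * D) := by positivity
  have h2 : (((D : ℚ) + 1) / (2 * K * D) - ((K : ℚ) * D + K - 1) / (2 * (K : ℚ) ^ 2 * D)
      = 1 / (2 * (K : ℚ) ^ 2 * D)) := by
    field_simp; ring
  refine ⟨?_, h2, hpos, by linarith⟩
  have hden' : ((D : ℚ) - 1) * K + 2 * K - 1 ≠ 0 := ne_of_gt hden
  have key : (K : ℚ) + (((D : ℚ) - 1) * K ^ 2 + K) / (((D : ℚ) - 1) * K + 2 * K - 1)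
      = (2 * (K : ℚ) ^ 2 * D) / ((K : ℚ) * D + K - 1) := by
    have hd2 : ((K : ℚ) * D + K - 1) ≠ 0 := by nlinarith
    rw [show ((D : ℚ) - 1) * K + 2 * K - 1 = (K : ℚ) * D + K - 1 by ring, eq_div_iff hd2, add_mul, div_mul_cancel₀ _ hd2]
    ring
  rw [e1, e2, key, one_div_div]
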